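/- Let a : [t₀, ∞) → ℝ be positive and continuous with A(t) := ∫_t^∞ a(s)^{-1} ds < ∞. Suppose g : [t₀, ∞) → ℝ satisfies |g'(t)| ≤ C ( ∫_{t₀}^t a(u)^{n-2} du ) a(t)^{-n} for all t, where a is increasing and n ≥ 2. Then g(t) converges as t → ∞ to some limit g_∞, and |g(t) - g_∞| ≤ C ( ∫_{t₀}^∞ a(u)^{-1} du ) · ∫_t^∞ a(s)^{-1} ds. -/

import Mathlib

open MeasureTheory Set Filter

theorem stmt_11 (a g g' : ℝ → ℝ) (t₀ C : ℝ) (n : ℕ) (hn : 2 ≤ n) (hC : 0 ≤ C)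
    (hapos : ∀ t ∈ Set.Ici t₀, 0 < a t)
    (hacont : ContinuousOn a (Set.Ici t₀))
    (hamono : MonotoneOn a (Set.Ici t₀))
    (haInt : MeasureTheory.IntegrableOn (fun s => (a s)⁻¹) (Set.Ici t₀))
    (hderiv : ∀ t ∈ Set.Ici t₀, HasDerivAt g (g' t) t)
    (hbound : ∀ t ∈ Set.Ici t₀,
      |g' t| ≤ C * (∫ u in t₀..t, a u ^ (n - 2)) / a t ^ n) :
    ∃ g_inf : ℝ, Filter.Tendsto g Filter.atTop (nhds g_inf) ∧
      ∀ t ∈ Set.Ici t₀,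
        |g t - g_inf| ≤ C * (∫ u in Set.Ici t₀, (a u)⁻¹) * ∫ s in Set.Ioi t, (a s)⁻¹ := by
  set I := ∫ u in Set.Ici t₀, (a u)⁻¹ with hI
  have hInonneg : 0 ≤ I :=
    setIntegral_nonneg measurableSet_Ici (fun u hu => inv_nonneg.2 (hapos u hu).le)
  -- Step 1: pointwise bound |g' t| ≤ C * I * (a t)⁻¹
  have hbound2 : ∀ t ∈ Set.Ici t₀, |g' t| ≤ C * I * (a t)⁻¹ := by
    intro t ht
    have hat : (0:ℝ) < a t := hapos t ht
    have ht' : t₀ ≤ t := ht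
    have hsub : Set.Icc t₀ t ⊆ Set.Ici t₀ := Set.Icc_subset_Ici_self
    have hacont' : ContinuousOn a (Set.Icc t₀ t) := hacont.mono hsub
    have hint1 : IntervalIntegrable (fun u => a u ^ (n-2)) volume t₀ t := by
      apply ContinuousOn.intervalIntegrable
      rw [Set.uIcc_of_le ht']
      exact hacont'.pow _
    have hint2 : IntervalIntegrable (fun u => a t ^ (n-1) * (a u)⁻¹) volume t₀ t := by
      apply ContinuousOn.intervalIntegrable
      rw [Set.uIcc_of_le ht']
      exact continuousOn_const.mul (hacont'.inv₀ (fun u hu => (hapos u (hsub hu)).ne'))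
    have hJ : (∫ u in t₀..t, a u ^ (n-2)) ≤ a t ^ (n-1) * ∫ u in t₀..t, (a u)⁻¹ := by
      rw [← intervalIntegral.integral_const_mul]
      apply intervalIntegral.integral_mono_on ht' hint1 hint2
      intro u hu
      have hau : (0:ℝ) < a u := hapos u (hsub hu)
      have haut : a u ≤ a t := hamono (hsub hu) ht hu.2
      have e : a u ^ (n-1) = a u ^ (n-2) * a u := by
        rw [← pow_succ]; congr 1; omega
      calc a u ^ (n-2) = a u ^ (n-1) * (a u)⁻¹ := by
            rw [e, mul_assoc, mul_inv_cancel₀ hau.ne', mul_one]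
        _ ≤ a t ^ (n-1) * (a u)⁻¹ :=
            mul_le_mul_of_nonneg_right (pow_le_pow_left₀ hau.le haut _) (inv_nonneg.2 hau.le)
    have hII : (∫ u in t₀..t, (a u)⁻¹) ≤ I := by
      rw [intervalIntegral.integral_of_le ht']
      apply setIntegral_mono_set haInt
      · exact (ae_restrict_iff' measurableSet_Ici).2
          (Filter.Eventually.of_forall fun u hu => inv_nonneg.2 (hapos u hu).le)
      · exact HasSubset.Subset.eventuallyLE (fun u hu => le_of_lt hu.1)
    have hJ2 : (∫ u in t₀..t, a u ^ (n-2)) ≤ a t ^ (n-1) * I := by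
      refine hJ.trans ?_
      exact mul_le_mul_of_nonneg_left hII (pow_nonneg hat.le _)
    have hpow : a t ^ n = a t ^ (n-1) * a t := by
      rw [← pow_succ]; congr 1; omega
    calc |g' t| ≤ C * (∫ u in t₀..t, a u ^ (n-2)) / a t ^ n := hbound t ht
      _ ≤ C * (a t ^ (n-1) * I) / a t ^ n := by
          gcongr
      _ = C * I * (a t)⁻¹ := by
          rw [hpow]
          have h1 : a t ^ (n-1) ≠ 0 := (pow_pos hat _).ne'
          field_simp
  -- integrability of the bound
  have hK : IntegrableOn (fun s => C * I * (a s)⁻¹) (Set.Ici t₀) := haInt.const_mul _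
  -- measurability & integrability of g'
  have hg'eq : ∀ t ∈ Set.Ioi t₀, deriv g t = g' t :=
    fun t ht => (hderiv t (Set.mem_Ici.2 (le_of_lt ht))).deriv
  have hg'meas : AEStronglyMeasurable g' (volume.restrict (Set.Ioi t₀)) :=
    (measurable_deriv g).aestronglyMeasurable.congr
      ((ae_restrict_iff' measurableSet_Ioi).2
        (Filter.Eventually.of_forall fun t ht => hg'eq t ht))
  have hg'int : IntegrableOn g' (Set.Ioi t₀) := by
    apply Integrable.mono' (hK.mono_set Set.Ioi_subset_Ici_self) hg'meas
    exact (ae_restrict_iff' measurableSet_Ioi).2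
      (Filter.Eventually.of_forall fun t ht => by
        simpa [Real.norm_eq_abs] using hbound2 t (Set.mem_Ici.2 (le_of_lt ht)))
  have hg'Ici : IntegrableOn g' (Set.Ici t₀) :=
    hg'int.congr_set_ae Ioi_ae_eq_Ici.symm
  -- FTC limit
  have hlim : ∀ t ∈ Set.Ici t₀, Tendsto g atTop (nhds (g t + ∫ s in Set.Ioi t, g' s)) := by
    intro t ht
    have hioi : IntegrableOn g' (Set.Ioi t) :=
      hg'int.mono_set (Set.Ioi_subset_Ioi ht)
    have h1 : Tendsto (fun T => ∫ s in t..T, g' s) atTop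
        (nhds (∫ s in Set.Ioi t, g' s)) :=
      intervalIntegral_tendsto_integral_Ioi t hioi tendsto_id
    have h2 : Tendsto (fun T => g t + ∫ s in t..T, g' s) atTop
        (nhds (g t + ∫ s in Set.Ioi t, g' s)) := tendsto_const_nhds.add h1
    apply h2.congr'
    filter_upwards [eventually_ge_atTop t] with T hT
    have hftc : ∫ s in t..T, g' s = g T - g t := by
      apply intervalIntegral.integral_eq_sub_of_hasDerivAt
      · intro s hs
        rw [Set.uIcc_of_le hT] at hs
        exact hderiv s (le_trans ht hs.1)
      · exact (intervalIntegrable_iff_integrableOn_Ioc_of_le hT).2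
          (hg'int.mono_set (fun s hs => lt_of_le_of_lt ht hs.1))
    rw [hftc]; ring
  refine ⟨g t₀ + ∫ s in Set.Ioi t₀, g' s, hlim t₀ Set.self_mem_Ici, ?_⟩
  intro t ht
  have huniq : g t + ∫ s in Set.Ioi t, g' s = g t₀ + ∫ s in Set.Ioi t₀, g' s :=
    tendsto_nhds_unique (hlim t ht) (hlim t₀ Set.self_mem_Ici)
  have hdiff : g t - (g t₀ + ∫ s in Set.Ioi t₀, g' s) = -(∫ s in Set.Ioi t, g' s) := by
    rw [← huniq]; ring
  rw [hdiff, abs_neg]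
  have hioi : IntegrableOn g' (Set.Ioi t) := hg'int.mono_set (Set.Ioi_subset_Ioi ht)
  calc |∫ s in Set.Ioi t, g' s| ≤ ∫ s in Set.Ioi t, |g' s| := by
        simpa [Real.norm_eq_abs] using norm_integral_le_integral_norm (μ := volume.restrict (Set.Ioi t)) g'
    _ ≤ ∫ s in Set.Ioi t, C * I * (a s)⁻¹ := by
        apply setIntegral_mono_on hioi.abs
          (hK.mono_set (fun s hs => Set.mem_Ici.2 (le_trans ht (le_of_lt hs))))
          measurableSet_Ioi
        intro s hs
        exact hbound2 s (Set.mem_Ici.2 (le_trans ht (le_of_lt hs)))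
    _ = C * I * ∫ s in Set.Ioi t, (a s)⁻¹ := by
        rw [MeasureTheory.integral_const_mul]
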